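/- Over a field k, let F_n(X) be the Fibonacci polynomials with F_{-1}=0, F_0=1, F_n = X F_{n-1} + F_{n-2}. For every m ≥ 0, X^m = Σ_{k=0}^{⌊m/2⌋} z_{m−2k} F_{m−2k}(X), where z_m = 1 and z_{m−2k} = (−1)^k (C(m,k) − C(m,k−1))·1 for k = 1,…,⌊m/2⌋ (with C(m,−1):=0). -/

import Mathlib

open Polynomial Finset

def zcoef (m j : ℕ) : ℤ :=
  if j = 0 then (1 : ℤ) else (-1 : ℤ) ^ j * ((m.choose j : ℤ) - (m.choose (j - 1) : ℤ))

lemma zcoef_def (m j : ℕ) :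
    (if j = 0 then (1 : ℤ) else
      (-1 : ℤ) ^ j * ((m.choose j : ℤ) - (m.choose (j - 1) : ℤ))) = zcoef m j := rfl

lemma zcoef_zero (m : ℕ) : zcoef m 0 = 1 := rfl

lemma zcoef_succ (m j : ℕ) : zcoef (m + 1) (j + 1) = zcoef m (j + 1) - zcoef m j := by
  cases j with
  | zero =>
    simp only [zcoef, if_neg (Nat.one_ne_zero), if_pos rfl, Nat.add_sub_cancel]
    rw [Nat.choose_succ_succ m 0]
    push_cast [Nat.choose_one_right, Nat.choose_zero_right]
    ring
  | succ i =>
    simp only [zcoef, if_neg (Nat.succ_ne_zero _), Nat.add_sub_cancel]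
    rw [Nat.choose_succ_succ m (i + 1), Nat.choose_succ_succ m i]
    push_cast
    ring

lemma zcoef_mid (t : ℕ) : zcoef (2 * t + 1) (t + 1) = 0 := by
  have h : (2 * t + 1).choose t = (2 * t + 1).choose (t + 1) := by
    have := Nat.choose_symm (n := 2 * t + 1) (k := t + 1) (by omega)
    simpa [show 2 * t + 1 - (t + 1) = t by omega] using this
  simp [zcoef, h]

theorem zeckendorf_of_X_pow (k : Type*) [Field k] (F : ℕ → Polynomial k)
    (hF0 : F 0 = 1) (hF1 : F 1 = X)
    (hFrec : ∀ n : ℕ, F (n + 2) = X * F (n + 1) + F n) :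
    ∀ m : ℕ, (X : Polynomial k) ^ m = ∑ j ∈ Finset.range (m / 2 + 1),
      C (((if j = 0 then (1 : ℤ) else
        (-1 : ℤ) ^ j * ((m.choose j : ℤ) - (m.choose (j - 1) : ℤ))) : ℤ) : k) * F (m - 2 * j) := by
  have hx : ∀ n : ℕ, X * F (n + 1) = F (n + 2) - F n := by
    intro n; rw [hFrec]; ring
  intro m
  induction m with
  | zero => simp [hF0]
  | succ m ih =>
    simp only [zcoef_def] at ih ⊢
    set c : ℕ → Polynomial k := fun j => Polynomial.C ((zcoef m j : ℤ) : k) with hc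
    set b : ℕ → Polynomial k := fun j => Polynomial.C ((zcoef (m + 1) j : ℤ) : k) with hb
    have hkey : ∀ j : ℕ, b (j + 1) = c (j + 1) - c j := by
      intro j
      simp only [hb, hc, zcoef_succ]
      push_cast
      rw [map_sub]
    have hb0 : b 0 = 1 := by simp [hb, zcoef_zero]
    have hc0 : c 0 = 1 := by simp [hc, zcoef_zero]
    rw [pow_succ', ih, Finset.mul_sum]
    obtain ⟨t, ht⟩ | ⟨t, ht⟩ := Nat.even_or_odd m
    · -- m even
      obtain rfl : m = 2 * t := by omega
      have e1 : 2 * t / 2 + 1 = t + 1 := by omega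
      have e2 : (2 * t + 1) / 2 + 1 = t + 1 := by omega
      rw [e1, e2]
      have hsum : ∀ j ∈ Finset.range t,
          X * (c j * F (2 * t - 2 * j))
            = c j * F (2 * t + 1 - 2 * j) - c j * F (2 * t + 1 - 2 * (j + 1)) := by
        intro j hj
        simp only [Finset.mem_range] at hj
        have h1 : 2 * t - 2 * j = (2 * t - 2 * j - 1) + 1 := by omega
        have h2 : (2 * t - 2 * j - 1) + 2 = 2 * t + 1 - 2 * j := by omega
        have h3 : 2 * t - 2 * j - 1 = 2 * t + 1 - 2 * (j + 1) := by omega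
        rw [h1, mul_left_comm, hx, h2, h3, mul_sub]
      rw [Finset.sum_range_succ, Finset.sum_congr rfl hsum, Finset.sum_sub_distrib,
        show 2 * t - 2 * t = 0 from by omega, hF0]
      -- LHS = (A - B) + X * (c t * 1)
      rw [Finset.sum_range_succ' (fun j => b j * F (2 * t + 1 - 2 * j)) t]
      simp only [hkey, sub_mul, hb0, one_mul, Nat.mul_zero, Nat.sub_zero]
      rw [Finset.sum_sub_distrib]
      have hA : (∑ j ∈ Finset.range t, c (j + 1) * F (2 * t + 1 - 2 * (j + 1)))
          + c 0 * F (2 * t + 1 - 2 * 0)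
          = (∑ j ∈ Finset.range t, c j * F (2 * t + 1 - 2 * j)) + c t * F (2 * t + 1 - 2 * t) := by
        rw [← Finset.sum_range_succ' (fun j => c j * F (2 * t + 1 - 2 * j)) t,
          Finset.sum_range_succ]
      rw [show 2 * t + 1 - 2 * t = 1 from by omega] at hA
      simp only [Nat.mul_zero, Nat.sub_zero, hc0, one_mul] at hA
      have hXc : X * (c t * 1) = c t * F 1 := by rw [hF1]; ring
      linear_combination -hA + hXc
    · -- m odd
      obtain rfl : m = 2 * t + 1 := by omega
      have e1 : (2 * t + 1) / 2 + 1 = t + 1 := by omega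
      have e2 : (2 * t + 1 + 1) / 2 + 1 = t + 2 := by omega
      rw [e1, e2]
      have hsum : ∀ j ∈ Finset.range (t + 1),
          X * (c j * F (2 * t + 1 - 2 * j))
            = c j * F (2 * t + 1 + 1 - 2 * j) - c j * F (2 * t + 1 + 1 - 2 * (j + 1)) := by
        intro j hj
        simp only [Finset.mem_range] at hj
        have h1 : 2 * t + 1 - 2 * j = (2 * t + 1 - 2 * j - 1) + 1 := by omega
        have h2 : (2 * t + 1 - 2 * j - 1) + 2 = 2 * t + 1 + 1 - 2 * j := by omega
        have h3 : 2 * t + 1 - 2 * j - 1 = 2 * t + 1 + 1 - 2 * (j + 1) := by omega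
        rw [h1, mul_left_comm, hx, h2, h3, mul_sub]
      rw [Finset.sum_congr rfl hsum, Finset.sum_sub_distrib]
      rw [Finset.sum_range_succ' (fun j => b j * F (2 * t + 1 + 1 - 2 * j)) (t + 1)]
      simp only [hkey, sub_mul, hb0, one_mul, Nat.mul_zero, Nat.sub_zero]
      rw [Finset.sum_sub_distrib]
      have hA : (∑ j ∈ Finset.range (t + 1), c (j + 1) * F (2 * t + 1 + 1 - 2 * (j + 1)))
          + c 0 * F (2 * t + 1 + 1 - 2 * 0)
          = (∑ j ∈ Finset.range (t + 1), c j * F (2 * t + 1 + 1 - 2 * j))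
            + c (t + 1) * F (2 * t + 1 + 1 - 2 * (t + 1)) := by
        rw [← Finset.sum_range_succ' (fun j => c j * F (2 * t + 1 + 1 - 2 * j)) (t + 1),
          Finset.sum_range_succ]
      have hct : c (t + 1) = 0 := by simp [hc, zcoef_mid]
      rw [hct, zero_mul, add_zero] at hA
      simp only [Nat.mul_zero, Nat.sub_zero, hc0, one_mul] at hA
      linear_combination -hA
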